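/- arXiv:1211.7089 — 2 statements merged into one kernel-verified Lean document; each statement's English description precedes it below -/
import Mathlib

section
/- Let F be a weakly convex sparseness measure, J(x) = Σ_{i=1}^N F(x_i), and let γ ∈ [0,1) be a null-space constant bound for (J,A,K). Let M0 > 0 and define C1 = (F(M0)/M0)·(1−γ)/(1+γ) and C2 = (α√N + C1)/(C1·σ). Then for all vectors x*, x ∈ ℝ^N with ‖x*‖₀ ≤ K and ‖x − x*‖₂ ≤ M0, one has J(x) − J(x*) ≥ C1·(‖x − x*‖₂ − C2·‖A(x − x*)‖₂). -/
open Filter Set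

/-- Weak convexity on `[0,∞)` with parameter `ρ`. -/
def WeaklyConvexOnNonneg (F : ℝ → ℝ) (ρ : ℝ) : Prop :=
  ∀ t₁ t₂ : ℝ, 0 ≤ t₁ → 0 ≤ t₂ → ∀ l : ℝ, 0 ≤ l → l ≤ 1 →
    F (l * t₁ + (1 - l) * t₂) ≤
      l * F t₁ + (1 - l) * F t₂ - ρ * l * (1 - l) * (t₁ - t₂) ^ 2

/-- `F` is a weakly convex sparseness measure with weak-convexity parameter `ρ ≤ 0`. -/
structure IsWCSM (F : ℝ → ℝ) (ρ : ℝ) : Prop where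
  zero : F 0 = 0
  even : ∀ t, F (-t) = F t
  nontrivial : ∃ t, F t ≠ 0
  mono : ∀ s t : ℝ, 0 ≤ s → s ≤ t → F s ≤ F t
  ratio_anti : ∀ s t : ℝ, 0 < s → s ≤ t → F t / t ≤ F s / s
  rho_nonpos : ρ ≤ 0
  wconv : WeaklyConvexOnNonneg F ρ

/-- `α = lim_{t→0⁺} F(t)/t`, finite and positive, with `F(t) ≤ α|t|` for all `t`. -/
def IsAlpha (F : ℝ → ℝ) (α : ℝ) : Prop :=
  0 < α ∧ Tendsto (fun t => F t / t) (nhdsWithin 0 (Set.Ioi 0)) (nhds α) ∧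
    ∀ t : ℝ, F t ≤ α * |t|

/-- The generalized gradient set `∂F(t)`; by convention `∂F(0) = {0}`. -/
noncomputable def genGrad (F : ℝ → ℝ) (t : ℝ) : Set ℝ :=
  if t = 0 then {0}
  else {f : ℝ | ∀ ν : ℝ,
    ν * f ≤ Filter.limsup (fun θ => (F (t + θ * ν) - F t) / θ) (nhdsWithin 0 (Set.Ioi 0))}

/-- Euclidean (`ℓ2`) norm of a vector. -/
noncomputable def l2 {n : ℕ} (x : Fin n → ℝ) : ℝ := Real.sqrt (∑ i, (x i) ^ 2)

/-- `ℓ1` norm of a vector. -/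
def l1 {n : ℕ} (x : Fin n → ℝ) : ℝ := ∑ i, |x i|

/-- `ℓ0` "norm": number of nonzero entries. -/
noncomputable def l0 {n : ℕ} (x : Fin n → ℝ) : ℕ :=
  (Finset.univ.filter (fun i => x i ≠ 0)).card

/-- `z_S`: the vector equal to `z` on `S` and zero elsewhere. -/
def restr {n : ℕ} (x : Fin n → ℝ) (S : Finset (Fin n)) : Fin n → ℝ :=
  fun i => if i ∈ S then x i else 0

/-- `γ` is a null-space-constant bound for `(J, A, K)`. -/
def NSCBound {M N : ℕ} (J : (Fin N → ℝ) → ℝ) (A : Matrix (Fin M) (Fin N) ℝ)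
    (K : ℕ) (γ : ℝ) : Prop :=
  ∀ z : Fin N → ℝ, A.mulVec z = 0 → ∀ S : Finset (Fin N), S.card ≤ K →
    J (restr z S) ≤ γ * J (restr z Sᶜ)

/-- Spectral norm (`ℓ2`-operator norm) of a matrix. -/
noncomputable def opNorm2 {m n : ℕ} (A : Matrix (Fin m) (Fin n) ℝ) : ℝ :=
  sSup {c : ℝ | ∃ v : Fin n → ℝ, l2 v ≤ 1 ∧ c = l2 (A.mulVec v)}

section AuxLemmas

variable {F : ℝ → ℝ} {ρ : ℝ}

lemma myFabs (hF : IsWCSM F ρ) (t : ℝ) : F t = F |t| := by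
  rcases abs_cases t with ⟨h, _⟩ | ⟨h, _⟩
  · rw [h]
  · rw [h, hF.even]

lemma myFnonneg (hF : IsWCSM F ρ) (t : ℝ) : 0 ≤ F t := by
  rw [myFabs hF]
  have := hF.mono 0 |t| le_rfl (abs_nonneg t)
  rwa [hF.zero] at this

lemma myFsubadd_nn (hF : IsWCSM F ρ) (s t : ℝ) (hs : 0 ≤ s) (ht : 0 ≤ t) :
    F (s + t) ≤ F s + F t := by
  rcases eq_or_lt_of_le hs with rfl | hs'
  · simp [hF.zero]
  rcases eq_or_lt_of_le ht with rfl | ht'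
  · simp [hF.zero]
  have hst : 0 < s + t := by linarith
  have h1 : F (s + t) / (s + t) ≤ F s / s := hF.ratio_anti s (s + t) hs' (by linarith)
  have h2 : F (s + t) / (s + t) ≤ F t / t := hF.ratio_anti t (s + t) ht' (by linarith)
  rw [div_le_div_iff₀ hst hs'] at h1
  rw [div_le_div_iff₀ hst ht'] at h2
  nlinarith

lemma myFsubadd (hF : IsWCSM F ρ) (a b : ℝ) : F (a + b) ≤ F a + F b := by
  rw [myFabs hF (a + b), myFabs hF a, myFabs hF b]
  calc F |a + b| ≤ F (|a| + |b|) := hF.mono _ _ (abs_nonneg _) (abs_add_le a b)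
    _ ≤ F |a| + F |b| := myFsubadd_nn hF _ _ (abs_nonneg a) (abs_nonneg b)

lemma myFratioLB (hF : IsWCSM F ρ) {M0 : ℝ} (hM0 : 0 < M0) (t : ℝ) (ht : |t| ≤ M0) :
    F M0 / M0 * |t| ≤ F t := by
  rcases eq_or_ne t 0 with rfl | ht0
  · simp [hF.zero]
  have habs : 0 < |t| := abs_pos.mpr ht0
  have := hF.ratio_anti |t| M0 habs ht
  rw [div_le_div_iff₀ hM0 habs] at this
  rw [myFabs hF t]
  calc F M0 / M0 * |t| = F M0 * |t| / M0 := by ring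
    _ ≤ F |t| := by
        rw [div_le_iff₀ hM0]
        linarith

lemma myl2_eq_norm {n : ℕ} (x : EuclideanSpace ℝ (Fin n)) : l2 x = ‖x‖ := by
  rw [EuclideanSpace.norm_eq, l2]
  simp [sq_abs]

lemma myl2_nonneg {n : ℕ} (x : Fin n → ℝ) : 0 ≤ l2 x := Real.sqrt_nonneg _

lemma myabs_le_l2 {n : ℕ} (x : Fin n → ℝ) (i : Fin n) : |x i| ≤ l2 x := by
  rw [l2, ← Real.sqrt_sq_eq_abs]
  apply Real.sqrt_le_sqrt
  exact Finset.single_le_sum (fun j _ => sq_nonneg (x j)) (Finset.mem_univ i)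

lemma myl2_le_l1 {n : ℕ} (x : Fin n → ℝ) : l2 x ≤ l1 x := by
  rw [l2, l1]
  have h1 : ∑ i, (x i) ^ 2 ≤ (∑ i, |x i|) ^ 2 := by
    calc ∑ i, (x i) ^ 2 = ∑ i, |x i| * |x i| := by
          apply Finset.sum_congr rfl; intro i _
          rw [pow_two, ← abs_mul_abs_self]
      _ ≤ ∑ i, |x i| * (∑ j, |x j|) := by
          apply Finset.sum_le_sum; intro i _
          apply mul_le_mul_of_nonneg_left _ (abs_nonneg _)
          exact Finset.single_le_sum (fun j _ => abs_nonneg (x j)) (Finset.mem_univ i)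
      _ = (∑ i, |x i|) ^ 2 := by rw [← Finset.sum_mul]; ring
  calc Real.sqrt (∑ i, (x i) ^ 2) ≤ Real.sqrt ((∑ i, |x i|) ^ 2) := Real.sqrt_le_sqrt h1
    _ = ∑ i, |x i| := Real.sqrt_sq (Finset.sum_nonneg fun i _ => abs_nonneg _)

lemma myl1_le_sqrt_l2 {n : ℕ} (x : Fin n → ℝ) : l1 x ≤ Real.sqrt n * l2 x := by
  rw [l1, l2]
  have hcs := Finset.sum_mul_sq_le_sq_mul_sq Finset.univ (fun i : Fin n => |x i|) (fun _ => 1)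
  simp only [mul_one, one_pow, Finset.sum_const, Finset.card_univ, Fintype.card_fin,
    nsmul_eq_mul] at hcs
  have h1 : (∑ i, |x i|) ^ 2 ≤ (↑n : ℝ) * ∑ i, (x i) ^ 2 := by
    calc (∑ i, |x i|) ^ 2 ≤ (∑ i, |x i| ^ 2) * ((n : ℝ) * 1) := by
          simpa using hcs
      _ = (↑n : ℝ) * ∑ i, (x i) ^ 2 := by
          simp only [sq_abs, mul_one]; ring
  have h2 : 0 ≤ ∑ i, |x i| := Finset.sum_nonneg fun i _ => abs_nonneg _
  calc ∑ i, |x i| = Real.sqrt ((∑ i, |x i|) ^ 2) := (Real.sqrt_sq h2).symm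
    _ ≤ Real.sqrt ((↑n : ℝ) * ∑ i, (x i) ^ 2) := Real.sqrt_le_sqrt h1
    _ = Real.sqrt n * Real.sqrt (∑ i, (x i) ^ 2) := by
        rw [Real.sqrt_mul (Nat.cast_nonneg n)]

lemma myaux1 (u w G : ℝ) (hw : w ≠ 0) : (u / w) * (w * G) = u * G := by
  field_simp

lemma myaux2 (X c s : ℝ) (hc : c ≠ 0) (hs : s ≠ 0) : c * (X / (c * s)) * s = X := by
  field_simp

lemma myaux3 (c w s : ℝ) (hs : s ≠ 0) : (c * s) * (w / s) = c * w := by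
  field_simp

end AuxLemmas

set_option maxHeartbeats 1000000 in

/-- Lemma 3: `J(x) − J(x*) ≥ C1(‖x − x*‖₂ − C2‖A(x − x*)‖₂)`. -/
theorem stmt9 {M N : ℕ} (hMN : M < N) (F : ℝ → ℝ) (ρ α : ℝ)
    (hF : IsWCSM F ρ) (hα : IsAlpha F α)
    (A : Matrix (Fin M) (Fin N) ℝ) (K : ℕ)
    (γ : ℝ) (hγ0 : 0 ≤ γ) (hγ1 : γ < 1)
    (hNSC : NSCBound (fun x => ∑ i, F (x i)) A K γ)
    (σ : ℝ) (hσ : 0 < σ)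
    (hσmin : ∀ v : Fin N → ℝ,
      (∀ z : Fin N → ℝ, A.mulVec z = 0 → (∑ i, v i * z i) = 0) →
      σ * l2 v ≤ l2 (A.mulVec v))
    (M0 : ℝ) (hM0 : 0 < M0) (C1 C2 : ℝ)
    (hC1 : C1 = F M0 / M0 * ((1 - γ) / (1 + γ)))
    (hC2 : C2 = (α * Real.sqrt N + C1) / (C1 * σ)) :
    ∀ xs x : Fin N → ℝ, l0 xs ≤ K → l2 (x - xs) ≤ M0 →
      C1 * (l2 (x - xs) - C2 * l2 (A.mulVec (x - xs))) ≤
        (∑ i, F (x i)) - ∑ i, F (xs i) := by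
  classical
  intro xs x hK hM
  -- F M0 > 0
  have hFM0 : 0 < F M0 := by
    have h1 : ∀ᶠ t in nhdsWithin 0 (Set.Ioi 0), 0 < F t / t :=
      hα.2.1.eventually (eventually_gt_nhds hα.1)
    have h2 : ∀ᶠ t in nhdsWithin 0 (Set.Ioi 0), t < M0 :=
      eventually_nhdsWithin_of_eventually_nhds (eventually_lt_nhds hM0)
    have h3 : ∀ᶠ t in nhdsWithin 0 (Set.Ioi 0), (0:ℝ) < t := eventually_mem_nhdsWithin
    obtain ⟨t, ht1, ht2, ht3⟩ := (h1.and (h2.and h3)).exists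
    have hFt : 0 < F t := by
      have := mul_pos ht1 ht3
      rwa [div_mul_cancel₀ _ (ne_of_gt ht3)] at this
    calc (0:ℝ) < F t := hFt
      _ ≤ F M0 := hF.mono t M0 (le_of_lt ht3) (le_of_lt ht2)
  set c0 : ℝ := F M0 / M0 with hc0def
  have hc0 : 0 < c0 := div_pos hFM0 hM0
  have hγsum : (0:ℝ) < 1 + γ := by linarith
  have hC1pos : 0 < C1 := by
    rw [hC1]
    apply mul_pos hc0
    apply div_pos (by linarith) hγsum
  -- the kernel as a submodule of Euclidean space
  let Kk : Submodule ℝ (EuclideanSpace ℝ (Fin N)) :=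
  { carrier := {z | A.mulVec z = 0}
    add_mem' := by intro a b ha hb; simp only [Set.mem_setOf_eq] at *
                   show A.mulVec (a + b) = 0
                   rw [Matrix.mulVec_add, ha, hb, add_zero]
    zero_mem' := by show A.mulVec 0 = 0; simp [Matrix.mulVec_zero]
    smul_mem' := by intro c a ha; simp only [Set.mem_setOf_eq] at *
                    show A.mulVec (c • a) = 0
                    rw [Matrix.mulVec_smul, ha, smul_zero] }
  set h : Fin N → ℝ := x - xs with hhdef
  let hE : EuclideanSpace ℝ (Fin N) := WithLp.toLp 2 h
  let zE : EuclideanSpace ℝ (Fin N) := Kk.orthogonalProjectionOnto hE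
  let vE : EuclideanSpace ℝ (Fin N) := hE - zE
  let z : Fin N → ℝ := zE
  let v : Fin N → ℝ := vE
  have hzv : ∀ i, h i = z i + v i := by
    intro i
    show hE i = zE i + (hE i - zE i)
    ring
  have hAz : A.mulVec z = 0 := (Kk.orthogonalProjectionOnto hE).2
  have hvorth : vE ∈ Kkᗮ := Submodule.sub_starProjection_mem_orthogonal (K := Kk) hE
  -- v is orthogonal to the kernel (as a sum condition)
  have hvsum : ∀ z' : Fin N → ℝ, A.mulVec z' = 0 → (∑ i, v i * z' i) = 0 := by
    intro z' hz'
    have hmem : (WithLp.toLp 2 z' : EuclideanSpace ℝ (Fin N)) ∈ Kk := hz'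
    have h0 := (Submodule.mem_orthogonal Kk vE).mp hvorth (WithLp.toLp 2 z') hmem
    rw [PiLp.inner_apply] at h0
    simp only [RCLike.inner_apply, conj_trivial] at h0
    rw [← h0]
  -- Pythagoras facts
  have hinnerzv : (inner ℝ zE vE : ℝ) = 0 :=
    (Submodule.mem_orthogonal Kk vE).mp hvorth zE (Kk.orthogonalProjectionOnto hE).2
  have hEsum : zE + vE = hE := by simp [vE]
  have hpyth : ‖hE‖ ^ 2 = ‖zE‖ ^ 2 + ‖vE‖ ^ 2 := by
    rw [← hEsum, norm_add_sq_real, hinnerzv]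
    ring
  have hl2h : l2 h = ‖hE‖ := myl2_eq_norm hE
  have hl2z : l2 z = ‖zE‖ := myl2_eq_norm zE
  have hl2v : l2 v = ‖vE‖ := myl2_eq_norm vE
  have hzleh : l2 z ≤ l2 h := by
    rw [hl2z, hl2h]
    nlinarith [norm_nonneg zE, norm_nonneg hE, norm_nonneg vE]
  have htri : l2 h ≤ l2 z + l2 v := by
    rw [hl2h, hl2z, hl2v, ← hEsum]
    exact norm_add_le _ _
  -- support of xs
  set S : Finset (Fin N) := Finset.univ.filter (fun i => xs i ≠ 0) with hSdef
  have hScard : S.card ≤ K := hK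
  have hxsS : ∀ i, i ∉ S → xs i = 0 := by
    intro i hi
    by_contra hne
    exact hi (Finset.mem_filter.mpr ⟨Finset.mem_univ i, hne⟩)
  -- null space constant bound for z
  have hNSCz : (∑ i, F (restr z S i)) ≤ γ * ∑ i, F (restr z Sᶜ i) := hNSC z hAz S hScard
  -- Step A : J(x) - J(xs) ≥ J(h_{Sᶜ}) - J(h_S)
  have stepA : (∑ i, F (restr h Sᶜ i)) - (∑ i, F (restr h S i)) ≤
      (∑ i, F (x i)) - ∑ i, F (xs i) := by
    rw [← Finset.sum_sub_distrib, ← Finset.sum_sub_distrib]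
    apply Finset.sum_le_sum
    intro i _
    by_cases hi : i ∈ S
    · have h1 : restr h Sᶜ i = 0 := by
        simp [restr, Finset.mem_compl, hi]
      have h2 : restr h S i = h i := by simp [restr, hi]
      rw [h1, h2, hF.zero]
      have hsub : F (xs i) ≤ F (x i) + F (h i) := by
        have : xs i = x i + (-(h i)) := by simp only [hhdef, Pi.sub_apply]; ring
        rw [this]
        calc F (x i + (-(h i))) ≤ F (x i) + F (-(h i)) := myFsubadd hF _ _
          _ = F (x i) + F (h i) := by rw [hF.even]
      linarith
    · have h1 : restr h Sᶜ i = h i := by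
        simp [restr, Finset.mem_compl, hi]
      have h2 : restr h S i = 0 := by simp [restr, hi]
      have h3 : xs i = 0 := hxsS i hi
      rw [h1, h2, hF.zero, h3, hF.zero]
      have : h i = x i := by simp [hhdef, h3]
      rw [this]
  -- Step: J(h_S) ≤ J(z_S) + J(v_S)
  have stepB : (∑ i, F (restr h S i)) ≤ (∑ i, F (restr z S i)) + ∑ i, F (restr v S i) := by
    rw [← Finset.sum_add_distrib]
    apply Finset.sum_le_sum
    intro i _
    by_cases hi : i ∈ S
    · simp only [restr, if_pos hi]
      rw [hzv i]
      exact myFsubadd hF _ _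
    · simp [restr, hi, hF.zero]
  -- Step: J(z_{Sᶜ}) ≤ J(h_{Sᶜ}) + J(v_{Sᶜ})
  have stepC : (∑ i, F (restr z Sᶜ i)) ≤ (∑ i, F (restr h Sᶜ i)) + ∑ i, F (restr v Sᶜ i) := by
    rw [← Finset.sum_add_distrib]
    apply Finset.sum_le_sum
    intro i _
    by_cases hi : i ∈ Sᶜ
    · simp only [restr, if_pos hi]
      have : z i = h i + (-(v i)) := by rw [hzv i]; ring
      rw [this]
      calc F (h i + (-(v i))) ≤ F (h i) + F (-(v i)) := myFsubadd hF _ _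
        _ = F (h i) + F (v i) := by rw [hF.even]
    · simp [restr, hi, hF.zero]
  -- splitting sums
  have splitv : (∑ i, F (restr v S i)) + (∑ i, F (restr v Sᶜ i)) = ∑ i, F (v i) := by
    rw [← Finset.sum_add_distrib]
    apply Finset.sum_congr rfl
    intro i _
    by_cases hi : i ∈ S
    · have : i ∉ Sᶜ := by simp [hi]
      simp [restr, hi, this, hF.zero]
    · have : i ∈ Sᶜ := by simp [hi]
      simp [restr, hi, this, hF.zero]
  have splitz : (∑ i, F (restr z S i)) + (∑ i, F (restr z Sᶜ i)) = ∑ i, F (z i) := by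
    rw [← Finset.sum_add_distrib]
    apply Finset.sum_congr rfl
    intro i _
    by_cases hi : i ∈ S
    · have : i ∉ Sᶜ := by simp [hi]
      simp [restr, hi, this, hF.zero]
    · have : i ∈ Sᶜ := by simp [hi]
      simp [restr, hi, this, hF.zero]
  -- lower bound on J(z)
  have hzM0 : ∀ i, |z i| ≤ M0 := by
    intro i
    calc |z i| ≤ l2 z := myabs_le_l2 z i
      _ ≤ l2 h := hzleh
      _ ≤ M0 := hM
  have stepJz : c0 * l1 z ≤ ∑ i, F (z i) := by
    rw [l1, Finset.mul_sum]
    apply Finset.sum_le_sum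
    intro i _
    exact myFratioLB hF hM0 (z i) (hzM0 i)
  -- upper bound on J(v)
  have stepJv : (∑ i, F (v i)) ≤ α * (Real.sqrt N * l2 v) := by
    calc (∑ i, F (v i)) ≤ ∑ i, α * |v i| := by
          apply Finset.sum_le_sum
          intro i _
          exact hα.2.2 (v i)
      _ = α * l1 v := by rw [l1, Finset.mul_sum]
      _ ≤ α * (Real.sqrt N * l2 v) := by
          apply mul_le_mul_of_nonneg_left (myl1_le_sqrt_l2 v) (le_of_lt hα.1)
  -- sigma bound
  have hAhv : A.mulVec h = A.mulVec v := by
    have : h = z + v := funext hzv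
    rw [this, Matrix.mulVec_add, hAz, zero_add]
  have stepSigma : σ * l2 v ≤ l2 (A.mulVec h) := by
    rw [hAhv]
    exact hσmin v hvsum
  -- abbreviations
  set a := l2 h with ha
  set b := l2 v with hb
  set w := l2 (A.mulVec h) with hw
  set G := ∑ i, F (restr z Sᶜ i) with hG
  have hGnn : 0 ≤ G := Finset.sum_nonneg fun i _ => myFnonneg hF _
  have hbnn : 0 ≤ b := myl2_nonneg v
  have hwnn : 0 ≤ w := myl2_nonneg _
  -- Step 1 : C1 * (a - b) ≤ (1 - γ) * G
  have step1 : C1 * (a - b) ≤ (1 - γ) * G := by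
    have k1 : c0 * (a - b) ≤ (1 + γ) * G := by
      have k1a : a - b ≤ l2 z := by linarith
      have k1b : c0 * (a - b) ≤ c0 * l1 z := by
        apply mul_le_mul_of_nonneg_left _ (le_of_lt hc0)
        calc a - b ≤ l2 z := k1a
          _ ≤ l1 z := myl2_le_l1 z
      have k1c : (∑ i, F (z i)) ≤ (1 + γ) * G := by
        rw [← splitz]
        nlinarith [hNSCz]
      linarith
    have k2 : (0:ℝ) ≤ (1 - γ) / (1 + γ) := div_nonneg (by linarith) (le_of_lt hγsum)
    have k3 : C1 * (a - b) = ((1 - γ) / (1 + γ)) * (c0 * (a - b)) := by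
      rw [hC1, hc0def]; ring
    rw [k3]
    calc ((1 - γ) / (1 + γ)) * (c0 * (a - b)) ≤ ((1 - γ) / (1 + γ)) * ((1 + γ) * G) :=
          mul_le_mul_of_nonneg_left k1 k2
      _ = (1 - γ) * G := myaux1 _ _ _ (ne_of_gt hγsum)
  -- Step 2 : (1-γ) G - Jv ≤ T
  have step2 : (1 - γ) * G - (∑ i, F (v i)) ≤ (∑ i, F (x i)) - ∑ i, F (xs i) := by
    have hJvS : (0:ℝ) ≤ ∑ i, F (restr v S i) := Finset.sum_nonneg fun i _ => myFnonneg hF _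
    nlinarith [stepA, stepB, stepC, splitv, hNSCz]
  -- Step 4 : (C1 + α √N) b ≤ C1 C2 w
  have step4 : (C1 + α * Real.sqrt N) * b ≤ C1 * C2 * w := by
    have hCC : C1 * C2 * σ = α * Real.sqrt N + C1 := by
      rw [hC2]
      exact myaux2 _ _ _ (ne_of_gt hC1pos) (ne_of_gt hσ)
    have hb' : b ≤ w / σ := by
      rw [le_div_iff₀ hσ]
      calc b * σ = σ * b := mul_comm _ _
        _ ≤ w := stepSigma
    have hcoef : 0 ≤ C1 + α * Real.sqrt N := by
      have := mul_nonneg (le_of_lt hα.1) (Real.sqrt_nonneg (N:ℝ))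
      linarith
    calc (C1 + α * Real.sqrt N) * b ≤ (C1 + α * Real.sqrt N) * (w / σ) :=
          mul_le_mul_of_nonneg_left hb' hcoef
      _ = C1 * C2 * w := by
          rw [show C1 + α * Real.sqrt N = C1 * C2 * σ by linarith [hCC]]
          exact myaux3 _ _ _ (ne_of_gt hσ)
  -- conclude
  have expand : C1 * (a - C2 * w) = C1 * a - C1 * C2 * w := by ring
  have step1' : C1 * a - C1 * b ≤ (1 - γ) * G := by nlinarith [step1]
  have step4' : C1 * b + α * Real.sqrt N * b ≤ C1 * C2 * w := by nlinarith [step4]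
  have step3' : (∑ i, F (v i)) ≤ α * Real.sqrt N * b := by
    have := stepJv
    nlinarith [this]
  linarith [step1', step2, step3', step4', expand.le, expand.ge]
end

section
/- Let F be a weakly convex sparseness measure with parameter ρ ≤ 0, J(x) = Σ_{i=1}^N F(x_i), and let γ ∈ [0,1) be a null-space constant bound for (J,A,K). Let M0 > 0 and define C1 = (F(M0)/M0)·(1−γ)/(1+γ) and C2 = (α√N + C1)/(C1·σ). Suppose x*, x ∈ ℝ^N satisfy ‖x*‖₀ ≤ K, x ≠ x*, ‖x − x*‖₂ ≤ M0, (−4ρ)·‖x − x*‖₂ ≤ C1, and ‖x − x*‖₂ ≥ 2·C2·‖A(x − x*)‖₂. Then for every vector g ∈ ℝ^N with g_i ∈ ∂F(x_i) for each i, one has ⟨x − x*, g⟩ > 0; in fact ⟨x − x*, g⟩ ≥ (C1/4)·‖x − x*‖₂. -/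
open Filter Set

section Flem
variable {F : ℝ → ℝ} {ρ α : ℝ} (hF : IsWCSM F ρ) (hα : IsAlpha F α)
include hF

lemma F_abs (t : ℝ) : F t = F |t| := by
  rcases abs_choice t with h | h
  · rw [h]
  · rw [h, hF.even]

lemma F_nonneg (t : ℝ) : 0 ≤ F t := by
  rw [F_abs hF]
  have := hF.mono 0 |t| le_rfl (abs_nonneg t)
  rwa [hF.zero] at this

lemma F_subadd {a b : ℝ} (ha : 0 ≤ a) (hb : 0 ≤ b) : F (a + b) ≤ F a + F b := by
  rcases ha.eq_or_lt with h | h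
  · simp [← h, hF.zero]
  rcases hb.eq_or_lt with h' | h'
  · simp [← h', hF.zero]
  have h1 := hF.ratio_anti a (a + b) h (by linarith)
  have h2 := hF.ratio_anti b (a + b) h' (by linarith)
  have hab : 0 < a + b := by linarith
  have e1 : a * (F (a+b) / (a+b)) ≤ a * (F a / a) := by
    exact mul_le_mul_of_nonneg_left h1 ha
  have e2 : b * (F (a+b) / (a+b)) ≤ b * (F b / b) := by
    exact mul_le_mul_of_nonneg_left h2 hb
  have : (a + b) * (F (a+b) / (a+b)) ≤ a * (F a / a) + b * (F b / b) := by
    rw [add_mul]; linarith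
  rw [mul_div_cancel₀ _ hab.ne'] at this
  rw [mul_div_cancel₀ _ h.ne', mul_div_cancel₀ _ h'.ne'] at this
  exact this

lemma F_tri (u v : ℝ) : F u ≤ F v + F (u - v) := by
  rw [F_abs hF u, F_abs hF v, F_abs hF (u - v)]
  calc F |u| ≤ F (|v| + |u - v|) := by
        apply hF.mono _ _ (abs_nonneg u)
        calc |u| = |v + (u - v)| := by ring_nf
        _ ≤ |v| + |u - v| := abs_add_le _ _
  _ ≤ F |v| + F |u - v| := F_subadd hF (abs_nonneg v) (abs_nonneg (u - v))

include hα in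
lemma F_lip (u v : ℝ) : F v - α * |v - u| ≤ F u := by
  have := F_tri hF v u
  have h2 := hα.2.2 (v - u)
  linarith

lemma G_convex {t₁ t₂ : ℝ} (h1 : 0 ≤ t₁) (h2 : 0 ≤ t₂) {l : ℝ} (hl0 : 0 ≤ l) (hl1 : l ≤ 1) :
    F (l * t₁ + (1 - l) * t₂) - ρ * (l * t₁ + (1 - l) * t₂)^2 ≤
      l * (F t₁ - ρ * t₁^2) + (1 - l) * (F t₂ - ρ * t₂^2) := by
  have := hF.wconv t₁ t₂ h1 h2 l hl0 hl1
  nlinarith [this]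

lemma F_M0_pos {M0 : ℝ} (hM0 : 0 < M0) : 0 < F M0 := by
  rcases (F_nonneg hF M0).eq_or_lt with h | h
  · exfalso
    obtain ⟨t, ht⟩ := hF.nontrivial
    apply ht
    rw [F_abs hF]
    rcases le_or_gt |t| M0 with h1 | h1
    · have := hF.mono |t| M0 (abs_nonneg t) h1
      have := F_nonneg hF |t|
      linarith
    · have h2 := hF.ratio_anti M0 |t| hM0 h1.le
      rw [← h] at h2
      have h3 : F |t| / |t| ≤ 0 := by simpa using h2
      have h4 : 0 < |t| := by linarith
      have := F_nonneg hF |t|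
      have := (div_nonpos_iff.mp h3)
      rcases this with ⟨h5, h6⟩ | ⟨h5, h6⟩
      · linarith
      · linarith
  · exact h

end Flem
section Grad
variable {F : ℝ → ℝ} {ρ α : ℝ} (hF : IsWCSM F ρ) (hα : IsAlpha F α)
include hF hα

-- limsup of difference quotient is bounded by any eventual bound; cobounded from Lipschitz
lemma quot_cobounded {t ν : ℝ} :
    IsCoboundedUnder (· ≤ ·) (nhdsWithin (0:ℝ) (Set.Ioi 0))
      (fun θ => (F (t + θ * ν) - F t) / θ) := by
  have hev : ∀ᶠ θ in nhdsWithin (0:ℝ) (Set.Ioi 0),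
      -(α * |ν|) ≤ (F (t + θ * ν) - F t) / θ := by
    filter_upwards [self_mem_nhdsWithin] with θ (hθ : θ ∈ Set.Ioi (0:ℝ))
    have hθ0 : (0:ℝ) < θ := hθ
    have := F_lip hF hα (t + θ * ν) t
    have habs : |t - (t + θ * ν)| = θ * |ν| := by
      rw [show t - (t + θ * ν) = -(θ * ν) by ring, abs_neg, abs_mul, abs_of_pos hθ0]
    rw [habs] at this
    rw [le_div_iff₀ hθ0]
    nlinarith
  exact isCoboundedUnder_le_of_eventually_le _ hev

-- key convexity bound for t > 0, s ≥ 0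
lemma grad_ineq_pos_nonneg {t s g : ℝ} (ht : 0 < t) (hs : 0 ≤ s)
    (hg : g ∈ genGrad F t) :
    g * (s - t) ≤ F s - F t - ρ * (s - t)^2 := by
  rw [genGrad, if_neg ht.ne'] at hg
  have hg' := hg (s - t)
  rw [mul_comm] at hg'
  refine le_trans hg' (Filter.limsup_le_of_le (quot_cobounded hF hα) ?_)
  filter_upwards [Ioo_mem_nhdsGT_of_mem (show (0:ℝ) ∈ Set.Ico 0 1 by constructor <;> norm_num)]
    with θ hθ
  obtain ⟨hθ0, hθ1⟩ := hθ
  have hconv := G_convex hF hs ht.le hθ0.le hθ1.le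
  have hpt : θ * s + (1 - θ) * t = t + θ * (s - t) := by ring
  rw [hpt] at hconv
  rw [div_le_iff₀ hθ0]
  have hρ := hF.rho_nonpos
  have key : ρ * (θ^2 * (s - t)^2) ≤ 0 :=
    mul_nonpos_of_nonpos_of_nonneg hρ (by positivity)
  nlinarith [hconv, key]

lemma grad_nonneg {t g : ℝ} (ht : 0 < t) (hg : g ∈ genGrad F t) : 0 ≤ g := by
  rw [genGrad, if_neg ht.ne'] at hg
  have hg' := hg (-1)
  have hls : Filter.limsup (fun θ => (F (t + θ * (-1)) - F t) / θ)
      (nhdsWithin (0:ℝ) (Set.Ioi 0)) ≤ 0 := by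
    apply Filter.limsup_le_of_le (quot_cobounded hF hα)
    filter_upwards [Ioo_mem_nhdsGT_of_mem (show (0:ℝ) ∈ Set.Ico 0 t from ⟨le_rfl, ht⟩)]
      with θ hθ
    obtain ⟨hθ0, hθt⟩ := hθ
    have : F (t + θ * (-1)) ≤ F t := hF.mono _ _ (by linarith) (by linarith)
    apply div_nonpos_of_nonpos_of_nonneg <;> linarith
  have := le_trans hg' hls
  linarith

lemma grad_ineq_pos {t s g : ℝ} (ht : 0 < t) (hg : g ∈ genGrad F t) :
    g * (s - t) ≤ F s - F t - ρ * (s - t)^2 := by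
  have h1 := grad_ineq_pos_nonneg hF hα ht (abs_nonneg s) hg
  have hgn := grad_nonneg hF hα ht hg
  have hsle : s ≤ |s| := le_abs_self s
  have h2 : g * (s - t) ≤ g * (|s| - t) := by nlinarith
  have h3 : F s = F |s| := F_abs hF s
  have hρ := hF.rho_nonpos
  have h4 : ρ * (|s| - t)^2 - ρ * (s - t)^2 ≥ 0 := by
    have : (|s| - t)^2 ≤ (s - t)^2 := by
      have : s^2 = |s|^2 := (sq_abs s).symm
      nlinarith
    nlinarith
  linarith

lemma grad_ineq {t s g : ℝ} (hg : g ∈ genGrad F t) :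
    g * (s - t) ≤ F s - F t - ρ * (s - t)^2 := by
  rcases lt_trichotomy t 0 with ht | ht | ht
  · -- use evenness: -g ∈ genGrad F (-t)
    have hg' : -g ∈ genGrad F (-t) := by
      rw [genGrad, if_neg (by linarith : (-t) ≠ 0)]
      intro ν
      rw [genGrad, if_neg ht.ne] at hg
      have := hg (-ν)
      have heq : (fun θ => (F (t + θ * (-ν)) - F t) / θ)
          = (fun θ => (F (-t + θ * ν) - F (-t)) / θ) := by
        funext θ
        rw [show -t + θ * ν = -(t + θ * (-ν)) by ring, hF.even, hF.even]
      rw [heq] at this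
      linarith [this]
    have := grad_ineq_pos hF hα (by linarith : (0:ℝ) < -t) hg' (s := -s)
    rw [hF.even s, hF.even t] at this
    nlinarith [this]
  · subst ht
    rw [genGrad, if_pos rfl] at hg
    simp only [Set.mem_singleton_iff] at hg
    subst hg
    have := F_nonneg hF s
    have hρ := hF.rho_nonpos
    rw [hF.zero]
    nlinarith
  · exact grad_ineq_pos hF hα ht hg

end Grad
section Vec
variable {n : ℕ}

lemma l2_eq_norm (v : EuclideanSpace ℝ (Fin n)) : l2 v = ‖v‖ := by
  rw [EuclideanSpace.norm_eq]
  simp [l2, Real.norm_eq_abs, sq_abs]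

lemma l2_nonneg (v : Fin n → ℝ) : 0 ≤ l2 v := Real.sqrt_nonneg _

lemma abs_le_l2 (v : Fin n → ℝ) (i : Fin n) : |v i| ≤ l2 v := by
  rw [l2, ← Real.sqrt_sq_eq_abs]
  apply Real.sqrt_le_sqrt
  exact Finset.single_le_sum (f := fun j => (v j)^2) (fun j _ => sq_nonneg _) (Finset.mem_univ i)

lemma l2_le_l1 (v : Fin n → ℝ) : l2 v ≤ l1 v := by
  rw [l2]
  have h1 : ∑ i, (v i)^2 ≤ (∑ i, |v i|)^2 := by
    have := Finset.sum_sq_le_sq_sum_of_nonneg (s := Finset.univ)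
      (f := fun i : Fin n => |v i|) (fun i _ => abs_nonneg _)
    simpa [sq_abs] using this
  calc Real.sqrt (∑ i, (v i)^2) ≤ Real.sqrt ((∑ i, |v i|)^2) := Real.sqrt_le_sqrt h1
  _ = ∑ i, |v i| := Real.sqrt_sq (Finset.sum_nonneg fun i _ => abs_nonneg _)

lemma l1_le_sqrt_l2 (v : Fin n → ℝ) : l1 v ≤ Real.sqrt n * l2 v := by
  have := Real.sum_mul_le_sqrt_mul_sqrt Finset.univ (fun _ : Fin n => (1:ℝ)) (fun i => |v i|)
  simp only [one_mul, one_pow, sq_abs] at this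
  simpa [l1, l2, Finset.card_univ] using this

lemma sq_l2 (v : Fin n → ℝ) : l2 v ^ 2 = ∑ i, (v i)^2 :=
  Real.sq_sqrt (Finset.sum_nonneg fun i _ => sq_nonneg _)

lemma J_restr (F : ℝ → ℝ) (hF0 : F 0 = 0) (v : Fin n → ℝ) (S : Finset (Fin n)) :
    ∑ i, F (restr v S i) = ∑ i ∈ S, F (v i) := by
  calc ∑ i, F (restr v S i) = ∑ i, (if i ∈ S then F (v i) else 0) := by
        apply Finset.sum_congr rfl
        intro i _
        by_cases h : i ∈ S <;> simp [restr, h, hF0]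
  _ = ∑ i ∈ S, F (v i) := by rw [Finset.sum_ite_mem, Finset.univ_inter]

end Vec
noncomputable def kerSub {M N : ℕ} (A : Matrix (Fin M) (Fin N) ℝ) :
    Submodule ℝ (EuclideanSpace ℝ (Fin N)) where
  carrier := {v | A.mulVec v = 0}
  add_mem' := by
    intro a b ha hb
    simp only [Set.mem_setOf_eq] at *
    rw [WithLp.ofLp_add, Matrix.mulVec_add, ha, hb, add_zero]
  zero_mem' := by
    simp only [Set.mem_setOf_eq]
    exact Matrix.mulVec_zero A
  smul_mem' := by
    intro c a ha
    simp only [Set.mem_setOf_eq] at *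
    rw [WithLp.ofLp_smul, Matrix.mulVec_smul, ha, smul_zero]

lemma decomp {M N : ℕ} (A : Matrix (Fin M) (Fin N) ℝ) (h : Fin N → ℝ) :
    ∃ z w : Fin N → ℝ, (∀ i, h i = z i + w i) ∧ A.mulVec z = 0 ∧
      (∀ z' : Fin N → ℝ, A.mulVec z' = 0 → (∑ i, w i * z' i) = 0) ∧
      l2 z ≤ l2 h ∧ l2 h ≤ l2 z + l2 w ∧ A.mulVec w = A.mulVec h := by
  set hE : EuclideanSpace ℝ (Fin N) := WithLp.toLp 2 h with hhE
  set z : EuclideanSpace ℝ (Fin N) := (Submodule.orthogonalProjection (kerSub A) hE :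
    EuclideanSpace ℝ (Fin N)) with hzdef
  set w : EuclideanSpace ℝ (Fin N) := hE - z with hwdef
  have hzker : A.mulVec z = 0 := (Submodule.orthogonalProjection (kerSub A) hE).2
  have hworth : w ∈ (kerSub A)ᗮ := Submodule.sub_starProjection_mem_orthogonal (K := kerSub A) hE
  refine ⟨z, w, ?_, hzker, ?_, ?_, ?_, ?_⟩
  · intro i
    show h i = z i + (hE i - z i)
    ring_nf
    rfl
  · intro z' hz'
    have := (Submodule.mem_orthogonal _ _).mp hworth (WithLp.toLp 2 z') hz'
    simpa [PiLp.inner_apply, RCLike.inner_apply, mul_comm] using this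
  · rw [l2_eq_norm z, l2_eq_norm hE]
    calc ‖z‖ = ‖Submodule.orthogonalProjection (kerSub A) hE‖ := rfl
    _ ≤ ‖(Submodule.orthogonalProjection (kerSub A) : EuclideanSpace ℝ (Fin N) →L[ℝ] _)‖ * ‖hE‖ :=
        ContinuousLinearMap.le_opNorm _ _
    _ ≤ 1 * ‖hE‖ :=
        mul_le_mul_of_nonneg_right (Submodule.orthogonalProjection_norm_le _) (norm_nonneg _)
    _ = ‖hE‖ := one_mul _
  · rw [l2_eq_norm z, l2_eq_norm hE, l2_eq_norm w]
    calc ‖hE‖ = ‖z + w‖ := by rw [hwdef]; congr 1; abel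
    _ ≤ ‖z‖ + ‖w‖ := norm_add_le _ _
  · show A.mulVec (hE - z) = _
    rw [Matrix.mulVec_sub, hzker, sub_zero]

/-- Lemma 4: in the annulus, `⟨x − x*, g⟩ > 0`, in fact
`⟨x − x*, g⟩ ≥ (C1/4)‖x − x*‖₂`, for any generalized-gradient selection `g`. -/
theorem stmt11 {M N : ℕ} (hMN : M < N) (F : ℝ → ℝ) (ρ α : ℝ)
    (hF : IsWCSM F ρ) (hα : IsAlpha F α)
    (A : Matrix (Fin M) (Fin N) ℝ) (K : ℕ)
    (γ : ℝ) (hγ0 : 0 ≤ γ) (hγ1 : γ < 1)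
    (hNSC : NSCBound (fun x => ∑ i, F (x i)) A K γ)
    (σ : ℝ) (hσ : 0 < σ)
    (hσmin : ∀ v : Fin N → ℝ,
      (∀ z : Fin N → ℝ, A.mulVec z = 0 → (∑ i, v i * z i) = 0) →
      σ * l2 v ≤ l2 (A.mulVec v))
    (M0 : ℝ) (hM0 : 0 < M0) (C1 C2 : ℝ)
    (hC1 : C1 = F M0 / M0 * ((1 - γ) / (1 + γ)))
    (hC2 : C2 = (α * Real.sqrt N + C1) / (C1 * σ))
    (xs x : Fin N → ℝ) (hxs : l0 xs ≤ K) (hne : x ≠ xs)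
    (hball : l2 (x - xs) ≤ M0)
    (hrho : -4 * ρ * l2 (x - xs) ≤ C1)
    (hann : 2 * C2 * l2 (A.mulVec (x - xs)) ≤ l2 (x - xs)) :
    ∀ g : Fin N → ℝ, (∀ i, g i ∈ genGrad F (x i)) →
      0 < (∑ i, (x i - xs i) * g i) ∧
      C1 / 4 * l2 (x - xs) ≤ ∑ i, (x i - xs i) * g i := by
  intro g hg
  have hβ : 0 < F M0 / M0 := div_pos (F_M0_pos hF hM0) hM0
  have h1γ : (0:ℝ) < 1 + γ := by linarith
  have hC1pos : 0 < C1 := by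
    rw [hC1]; exact mul_pos hβ (div_pos (by linarith) h1γ)
  have hnh_pos : 0 < l2 (x - xs) := by
    rw [l2_eq_norm (WithLp.toLp 2 (x - xs) : EuclideanSpace ℝ (Fin N))]
    rw [norm_pos_iff]
    intro hc
    exact hne (sub_eq_zero.mp (congrArg WithLp.ofLp hc))
  have hnh_nonneg : 0 ≤ l2 (x - xs) := hnh_pos.le
  -- decomposition
  obtain ⟨z, w, hzw0, hzker, hperp, hzle, htri, hAw⟩ := decomp A (x - xs)
  have hzw : ∀ i, x i - xs i = z i + w i := fun i => hzw0 i
  have hσw : σ * l2 w ≤ l2 (A.mulVec (x - xs)) := by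
    have := hσmin w hperp
    rwa [hAw] at this
  -- the support set
  set S : Finset (Fin N) := Finset.univ.filter (fun i => xs i ≠ 0) with hS
  have hScard : S.card ≤ K := hxs
  have hxsS : ∀ i ∈ Sᶜ, xs i = 0 := by
    intro i hi
    rw [Finset.mem_compl, hS, Finset.mem_filter] at hi
    by_contra hcon
    exact hi ⟨Finset.mem_univ i, hcon⟩
  -- pointwise lower bound for F via β on [0, M0]
  have hFlb : ∀ c : ℝ, |c| ≤ M0 → F M0 / M0 * |c| ≤ F c := by
    intro c hc
    rcases eq_or_ne c 0 with h0 | h0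
    · simp [h0, hF.zero]
    · have habs : 0 < |c| := abs_pos.mpr h0
      have hra := hF.ratio_anti |c| M0 habs hc
      rw [F_abs hF c]
      calc F M0 / M0 * |c| ≤ F |c| / |c| * |c| :=
            mul_le_mul_of_nonneg_right hra (abs_nonneg c)
      _ = F |c| := div_mul_cancel₀ _ habs.ne'
  -- Step B : C1/2 * ‖h‖ ≤ J(x) - J(xs)
  have hstepB : C1 / 2 * l2 (x - xs) ≤ (∑ i, F (x i)) - (∑ i, F (xs i)) := by
    -- h1 : split of J difference
    have h1 : (∑ i ∈ Sᶜ, F (x i - xs i)) - (∑ i ∈ S, F (x i - xs i)) ≤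
        (∑ i, F (x i)) - (∑ i, F (xs i)) := by
      have hsplit1 : (∑ i, F (x i)) = (∑ i ∈ S, F (x i)) + ∑ i ∈ Sᶜ, F (x i) :=
        (Finset.sum_add_sum_compl S _).symm
      have hsplit2 : (∑ i, F (xs i)) = (∑ i ∈ S, F (xs i)) + ∑ i ∈ Sᶜ, F (xs i) :=
        (Finset.sum_add_sum_compl S _).symm
      have hA1 : ∑ i ∈ S, (F (xs i) - F (x i - xs i)) ≤ ∑ i ∈ S, F (x i) := by
        apply Finset.sum_le_sum
        intro i _
        have := F_tri hF (xs i) (x i)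
        have heq : F (xs i - x i) = F (x i - xs i) := by
          rw [show xs i - x i = -(x i - xs i) by ring, hF.even]
        linarith
      have hA2 : ∑ i ∈ Sᶜ, F (x i) = ∑ i ∈ Sᶜ, (F (xs i) + F (x i - xs i)) := by
        apply Finset.sum_congr rfl
        intro i hi
        rw [hxsS i hi, hF.zero, sub_zero, zero_add]
      rw [hsplit1, hsplit2, hA2]
      rw [Finset.sum_sub_distrib] at hA1
      rw [Finset.sum_add_distrib]
      linarith
    -- h2, h3 : compare F(h) with F(z), F(w) on Sᶜ and S
    have h2 : (∑ i ∈ Sᶜ, F (z i)) - (∑ i ∈ Sᶜ, F (w i)) ≤ ∑ i ∈ Sᶜ, F (x i - xs i) := by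
      rw [← Finset.sum_sub_distrib]
      apply Finset.sum_le_sum
      intro i _
      have := F_tri hF (z i) (x i - xs i)
      have heq : F (z i - (x i - xs i)) = F (w i) := by
        rw [show z i - (x i - xs i) = -(w i) by rw [hzw i]; ring, hF.even]
      linarith
    have h3 : ∑ i ∈ S, F (x i - xs i) ≤ (∑ i ∈ S, F (z i)) + ∑ i ∈ S, F (w i) := by
      rw [← Finset.sum_add_distrib]
      apply Finset.sum_le_sum
      intro i _
      have := F_tri hF (x i - xs i) (z i)
      have heq : F (x i - xs i - z i) = F (w i) := by
        rw [show x i - xs i - z i = w i by rw [hzw i]; ring]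
      linarith
    -- h4 : NSC
    have h4 : ∑ i ∈ S, F (z i) ≤ γ * ∑ i ∈ Sᶜ, F (z i) := by
      have := hNSC z hzker S hScard
      simp only at this
      rwa [J_restr F hF.zero z S, J_restr F hF.zero z Sᶜ] at this
    -- h5 : lower bound on total J(z)
    have hzM0 : ∀ i, |z i| ≤ M0 := by
      intro i
      calc |z i| ≤ l2 z := abs_le_l2 z i
      _ ≤ l2 (x - xs) := hzle
      _ ≤ M0 := hball
    have h5 : F M0 / M0 * l2 z ≤ (∑ i ∈ S, F (z i)) + ∑ i ∈ Sᶜ, F (z i) := by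
      rw [Finset.sum_add_sum_compl S (fun i => F (z i))]
      calc F M0 / M0 * l2 z ≤ F M0 / M0 * l1 z :=
            mul_le_mul_of_nonneg_left (l2_le_l1 z) hβ.le
      _ = ∑ i, F M0 / M0 * |z i| := by rw [l1, Finset.mul_sum]
      _ ≤ ∑ i, F (z i) := Finset.sum_le_sum fun i _ => hFlb (z i) (hzM0 i)
    -- h6 : upper bound on J(w)
    have h6 : ∑ i, F (w i) ≤ α * Real.sqrt N * l2 w := by
      calc ∑ i, F (w i) ≤ ∑ i, α * |w i| := Finset.sum_le_sum fun i _ => hα.2.2 (w i)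
      _ = α * l1 w := by rw [l1, Finset.mul_sum]
      _ ≤ α * (Real.sqrt N * l2 w) :=
            mul_le_mul_of_nonneg_left (l1_le_sqrt_l2 w) hα.1.le
      _ = α * Real.sqrt N * l2 w := by ring
    have h6' : (∑ i ∈ S, F (w i)) + ∑ i ∈ Sᶜ, F (w i) ≤ α * Real.sqrt N * l2 w := by
      rw [Finset.sum_add_sum_compl S (fun i => F (w i))]
      exact h6
    -- hB1 : C1 * l2 z ≤ (1-γ) * ∑_{Sᶜ} F z
    have hB1 : C1 * l2 z ≤ (1 - γ) * ∑ i ∈ Sᶜ, F (z i) := by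
      have hmul : (1 - γ) / (1 + γ) * (F M0 / M0 * l2 z) ≤
          (1 - γ) / (1 + γ) * ((1 + γ) * ∑ i ∈ Sᶜ, F (z i)) := by
        apply mul_le_mul_of_nonneg_left _ (div_nonneg (by linarith) (by linarith))
        calc F M0 / M0 * l2 z ≤ (∑ i ∈ S, F (z i)) + ∑ i ∈ Sᶜ, F (z i) := h5
        _ ≤ γ * (∑ i ∈ Sᶜ, F (z i)) + ∑ i ∈ Sᶜ, F (z i) := by linarith
        _ = (1 + γ) * ∑ i ∈ Sᶜ, F (z i) := by ring
      have e1 : (1 - γ) / (1 + γ) * ((1 + γ) * ∑ i ∈ Sᶜ, F (z i)) =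
          (1 - γ) * ∑ i ∈ Sᶜ, F (z i) := by
        field_simp
      have e2 : (1 - γ) / (1 + γ) * (F M0 / M0 * l2 z) = C1 * l2 z := by
        rw [hC1]; ring
      rw [e1, e2] at hmul
      exact hmul
    -- hB4 : C1 * (l2 h - l2 w) ≤ C1 * l2 z
    have hB4 : C1 * (l2 (x - xs) - l2 w) ≤ C1 * l2 z :=
      mul_le_mul_of_nonneg_left (by linarith) hC1pos.le
    -- hB5 : (C1 + α √N) * l2 w ≤ C1/2 * l2 h
    have hC2' : C1 * C2 * σ = α * Real.sqrt N + C1 := by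
      rw [hC2]
      field_simp
    have hαN : (0:ℝ) ≤ α * Real.sqrt N :=
      mul_nonneg hα.1.le (Real.sqrt_nonneg _)
    have hC2pos : 0 < C2 := by
      rw [hC2]
      exact div_pos (by linarith) (mul_pos hC1pos hσ)
    have hB5 : (C1 + α * Real.sqrt N) * l2 w ≤ C1 / 2 * l2 (x - xs) := by
      calc (C1 + α * Real.sqrt N) * l2 w = (α * Real.sqrt N + C1) * l2 w := by ring
      _ = C1 * C2 * (σ * l2 w) := by rw [← hC2']; ring
      _ ≤ C1 * C2 * l2 (A.mulVec (x - xs)) :=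
            mul_le_mul_of_nonneg_left hσw (by positivity)
      _ = C1 / 2 * (2 * C2 * l2 (A.mulVec (x - xs))) := by ring
      _ ≤ C1 / 2 * l2 (x - xs) :=
            mul_le_mul_of_nonneg_left hann (by positivity)
    -- assemble
    have hwnn : 0 ≤ l2 w := l2_nonneg w
    linarith [h1, h2, h3, h4, hB1, hB4, hB5, h6']
  -- Step A : subgradient inequality summed
  have hstepA : (∑ i, F (x i)) - (∑ i, F (xs i)) + ρ * (l2 (x - xs))^2 ≤
      ∑ i, (x i - xs i) * g i := by
    have hsq : (l2 (x - xs))^2 = ∑ i, (x i - xs i)^2 := sq_l2 (x - xs)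
    have hpt : ∀ i, F (x i) - F (xs i) + ρ * (x i - xs i)^2 ≤ (x i - xs i) * g i := by
      intro i
      have := grad_ineq hF hα (hg i) (s := xs i)
      nlinarith [this]
    have hsum := Finset.sum_le_sum (fun i (_ : i ∈ Finset.univ) => hpt i)
    rw [hsq]
    calc (∑ i, F (x i)) - (∑ i, F (xs i)) + ρ * ∑ i, (x i - xs i)^2
        = ∑ i, (F (x i) - F (xs i) + ρ * (x i - xs i)^2) := by
          rw [Finset.sum_add_distrib, Finset.sum_sub_distrib, Finset.mul_sum]
    _ ≤ ∑ i, (x i - xs i) * g i := hsum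
  -- conclusion
  have hrho' : ρ * (l2 (x - xs))^2 ≥ -(C1/4) * l2 (x - xs) := by
    nlinarith [hrho, hnh_nonneg]
  constructor
  · have : C1 / 4 * l2 (x - xs) ≤ ∑ i, (x i - xs i) * g i := by nlinarith
    have hq : 0 < C1 / 4 * l2 (x - xs) := by positivity
    linarith
  · nlinarith
end
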